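/- The full existential completion of any lex primary doctrine satisfies the Rule of Choice: if P : C^op → InfSl is a lex primary doctrine and P^∃ its full existential completion, then for every α ∈ P^∃(A × B), if ⊤_A ≤ ∃_{π_A}(α) in P^∃(A), then there exists an arrow f : A → B in C such that ⊤_A ≤ P^∃_{⟨id_A, f⟩}(α). -/

import Mathlib

open CategoryTheory CategoryTheory.Limits

universe w v u

structure Doctrine (C : Type u) [Category.{v} C] where
  P : C → Type w
  [instOrd : ∀ A, SemilatticeInf (P A)]
  [instTop : ∀ A, OrderTop (P A)]
  map : ∀ {A B : C}, (A ⟶ B) → P B → P A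
  map_id : ∀ (A : C) (x : P A), map (𝟙 A) x = x
  map_comp : ∀ {A B D : C} (f : A ⟶ B) (g : B ⟶ D) (x : P D),
      map (f ≫ g) x = map f (map g x)
  map_mono : ∀ {A B : C} (f : A ⟶ B), Monotone (map f)
  map_top : ∀ {A B : C} (f : A ⟶ B), map f (⊤ : P B) = ⊤
  map_inf : ∀ {A B : C} (f : A ⟶ B) (x y : P B), map f (x ⊓ y) = map f x ⊓ map f y

attribute [instance] Doctrine.instOrd Doctrine.instTop

variable {C : Type u} [Category.{v} C]

structure Pt (P : Doctrine.{w} C) where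
  base : C
  pred : P.P base

structure PtHom (P : Doctrine.{w} C) (X Y : Pt P) where
  hom : X.base ⟶ Y.base
  cond : X.pred ≤ P.map hom Y.pred

theorem PtHom.ext' {P : Doctrine.{w} C} {X Y : Pt P} {f g : PtHom P X Y}
    (h : f.hom = g.hom) : f = g := by
  cases f; cases g; cases h; rfl

instance Pt.categoryStruct (P : Doctrine.{w} C) : CategoryStruct (Pt P) where
  Hom X Y := PtHom P X Y
  id X := ⟨𝟙 X.base, by rw [P.map_id]⟩
  comp f g := ⟨f.hom ≫ g.hom, by
    rw [P.map_comp]; exact le_trans f.cond (P.map_mono f.hom g.cond)⟩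

@[simp] theorem Pt.comp_hom {P : Doctrine.{w} C} {X Y Z : Pt P} (f : X ⟶ Y) (g : Y ⟶ Z) :
    (f ≫ g).hom = f.hom ≫ g.hom := rfl

@[simp] theorem Pt.id_hom {P : Doctrine.{w} C} (X : Pt P) : (𝟙 X : X ⟶ X).hom = 𝟙 X.base := rfl

instance Pt.category (P : Doctrine.{w} C) : Category (Pt P) where
  id_comp f := PtHom.ext' (by simp)
  comp_id f := PtHom.ext' (by simp)
  assoc f g h := PtHom.ext' (by simp)

structure ExEl (P : Doctrine.{w} C) (A : C) where
  dom : C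
  arr : dom ⟶ A
  pred : P.P dom

def ExLe (P : Doctrine.{w} C) {A : C} (x y : ExEl P A) : Prop :=
  ∃ h : x.dom ⟶ y.dom, x.arr = h ≫ y.arr ∧ x.pred ≤ P.map h y.pred

def ExEl.top (P : Doctrine.{w} C) (A : C) : ExEl P A := ⟨A, 𝟙 A, ⊤⟩

def ExEl.push {P : Doctrine.{w} C} {A B : C} (x : ExEl P A) (w : A ⟶ B) : ExEl P B :=
  ⟨x.dom, x.arr ≫ w, x.pred⟩

noncomputable def ExEl.meet [HasPullbacks C] {P : Doctrine.{w} C} {A : C} (x y : ExEl P A) : ExEl P A :=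
  ⟨pullback x.arr y.arr, pullback.fst x.arr y.arr ≫ x.arr,
    P.map (pullback.fst x.arr y.arr) x.pred ⊓ P.map (pullback.snd x.arr y.arr) y.pred⟩

noncomputable def Doctrine.reind [HasPullbacks C] (P : Doctrine.{w} C) {A A' : C} (u : A' ⟶ A)
    (y : ExEl P A) : ExEl P A' :=
  ⟨pullback u y.arr, pullback.fst u y.arr, P.map (pullback.snd u y.arr) y.pred⟩

/-- the full existential completion of any lex primary doctrine satisfies
the Rule of Choice: for `α ∈ P^∃(A ⨯ B)`, if `⊤_A ≤ ∃_{π_A}(α)` in `P^∃(A)` then there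
is an arrow `f : A ⟶ B` of `C` with `⊤_A ≤ P^∃_{⟨𝟙_A, f⟩}(α)`. -/
theorem fullExCompletion_ruleOfChoice [HasFiniteLimits C]
    (P : Doctrine.{w} C) (A B : C) (α : ExEl P (A ⨯ B))
    (h : ExLe P (ExEl.top P A) (α.push (prod.fst : A ⨯ B ⟶ A))) :
    ∃ f : A ⟶ B, ExLe P (ExEl.top P A) (P.reind (prod.lift (𝟙 A) f) α) := by
  obtain ⟨k, hk1, hk2⟩ := h
  simp only [ExEl.top, ExEl.push] at hk1 hk2
  revert k; intro (k : A ⟶ α.dom) hk1 hk2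
  refine ⟨k ≫ α.arr ≫ prod.snd, ?_⟩
  have hcomm : 𝟙 A ≫ prod.lift (𝟙 A) (k ≫ α.arr ≫ prod.snd) = k ≫ α.arr := by
    apply Limits.prod.hom_ext
    · rw [Category.id_comp, Category.assoc]; exact (prod.lift_fst _ _).trans hk1
    · rw [Category.id_comp, Category.assoc]; exact prod.lift_snd _ _
  refine ⟨pullback.lift (𝟙 A) k hcomm, ?_, ?_⟩
  · exact (pullback.lift_fst _ _ _).symm
  · have : pullback.lift (𝟙 A) k hcomm ≫ pullback.snd _ _ = k := pullback.lift_snd _ _ _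
    simp only [Doctrine.reind, ← P.map_comp, this]
    exact le_of_le_of_eq hk2 (congrArg (fun m => P.map m α.pred) this.symm)
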